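/- Let K be a complete discretely valued field of characteristic p > 0 with normalized valuation v, and let fil_n W_{m+1}(K) be the Brylinski–Kato filtration (p^{m−i} v(x_i) ≥ −n for all i). Let s ≥ 1 be an integer and y ∈ fil_s W_{m+1}(K) \ fil_{s−1} W_{m+1}(K). Then F(y) − y ∈ fil_{ps} W_{m+1}(K) \ fil_{ps−1} W_{m+1}(K), where F is the Frobenius (componentwise p-th power) on W_{m+1}(K). -/

import Mathlib

open Multiplicative

/-- The Brylinski–Kato filtration `fil_n W_{m+1}(K)` (multiplicative normalization:
additive valuation of `x` is `≥ −n` iff `Valued.v x ≤ ofAdd n`). -/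
def brylinskiKatoFil (p : ℕ) [Fact p.Prime] (K : Type*) [Field K]
    [Valued K (WithZero (Multiplicative ℤ))] (m : ℕ) (n : ℤ) :
    Set (TruncatedWittVector p (m + 1) K) :=
  {w | ∀ i : Fin (m + 1),
    (Valued.v (w.coeff i)) ^ (p ^ (m - i.val)) ≤
      ((Multiplicative.ofAdd n : Multiplicative ℤ) : WithZero (Multiplicative ℤ))}

/-- The Frobenius on `W_{m+1}(K)` for `K` of characteristic `p`: the componentwise
`p`-th power map. -/
def wittFrobenius (p : ℕ) [Fact p.Prime] (K : Type*) [Field K] (m : ℕ)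
    (w : TruncatedWittVector p (m + 1) K) : TruncatedWittVector p (m + 1) K :=
  TruncatedWittVector.mk p (fun i => w.coeff i ^ p)

open MvPolynomial Finset

namespace Stmt8Aux



variable {p : ℕ} [Fact p.Prime]

theorem whomog_pow {σ R : Type*} [CommSemiring R] {w : σ → ℕ} {φ : MvPolynomial σ R} {n : ℕ}
    (h : φ.IsWeightedHomogeneous w n) (k : ℕ) : (φ ^ k).IsWeightedHomogeneous w (k * n) := by
  induction k with
  | zero => simpa using isWeightedHomogeneous_one R w
  | succ k ih => rw [pow_succ, Nat.succ_mul]; exact ih.mul h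

theorem whomog_neg {σ R : Type*} [CommRing R] {w : σ → ℕ} {φ : MvPolynomial σ R} {n : ℕ}
    (h : φ.IsWeightedHomogeneous w n) : (-φ).IsWeightedHomogeneous w n := by
  intro d hd
  exact h (by simpa using hd)

theorem whomog_sub {σ R : Type*} [CommRing R] {w : σ → ℕ} {φ ψ : MvPolynomial σ R} {n : ℕ}
    (hφ : φ.IsWeightedHomogeneous w n) (hψ : ψ.IsWeightedHomogeneous w n) :
    (φ - ψ).IsWeightedHomogeneous w n := by
  rw [sub_eq_add_neg]; exact hφ.add (whomog_neg hψ)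

theorem whomog_aeval {σ τ R : Type*} [CommSemiring R] (w : σ → ℕ) (w' : τ → ℕ)
    (f : σ → MvPolynomial τ R) (hf : ∀ i, (f i).IsWeightedHomogeneous w' (w i))
    {φ : MvPolynomial σ R} {n : ℕ} (hφ : φ.IsWeightedHomogeneous w n) :
    (aeval f φ).IsWeightedHomogeneous w' n := by
  rw [← support_sum_monomial_coeff φ, map_sum]
  apply IsWeightedHomogeneous.sum
  intro d hd
  rw [aeval_monomial]
  have h1 : (Finsupp.weight w) d = n := hφ (mem_support_iff.mp hd)
  have h3 : ∑ i ∈ d.support, d i * w i = n := by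
    rw [← h1, Finsupp.weight_apply, Finsupp.sum]
    simp [smul_eq_mul]
  have h4 := (isWeightedHomogeneous_C w' (coeff d φ)).mul
    (IsWeightedHomogeneous.prod d.support (fun i => f i ^ d i) (fun i => d i * w i)
      (fun i _ => whomog_pow (hf i) (d i)))
  rw [zero_add, h3] at h4
  have h5 : (algebraMap R (MvPolynomial τ R)) (coeff d φ) = C (coeff d φ) := rfl
  rw [h5, Finsupp.prod]
  exact h4

theorem whomog_rename {σ τ R : Type*} [CommSemiring R] (w' : τ → ℕ) (f : σ → τ)
    {φ : MvPolynomial σ R} {n : ℕ} (hφ : φ.IsWeightedHomogeneous (fun i => w' (f i)) n) :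
    (rename f φ).IsWeightedHomogeneous w' n := by
  have h : rename f φ = aeval (fun i => X (f i)) φ := by rw [rename_eq_aeval]; rfl
  rw [h]
  exact whomog_aeval _ w' _ (fun i => isWeightedHomogeneous_X R w' (f i)) hφ

theorem whomog_wittPolynomial (R : Type*) [CommRing R] (k : ℕ) :
    (wittPolynomial p R k).IsWeightedHomogeneous (fun i : ℕ => p ^ i) (p ^ k) := by
  unfold wittPolynomial
  apply IsWeightedHomogeneous.sum
  intro i hi
  apply isWeightedHomogeneous_monomial
  rw [Finsupp.weight_apply, Finsupp.sum_single_index]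
  · rw [smul_eq_mul, ← pow_add]
    congr 1
    have := Finset.mem_range.mp hi
    omega
  · simp

theorem whomog_xInTermsOfW (n : ℕ) :
    (xInTermsOfW p ℚ n).IsWeightedHomogeneous (fun i : ℕ => p ^ i) (p ^ n) := by
  induction n using Nat.strong_induction_on with
  | _ n ih =>
    rw [xInTermsOfW_eq]
    have h1 : IsWeightedHomogeneous (fun i : ℕ => p ^ i)
        (X n - ∑ i ∈ range n, C ((p : ℚ) ^ i) * xInTermsOfW p ℚ i ^ p ^ (n - i)) (p ^ n) := by
      apply whomog_sub (isWeightedHomogeneous_X ℚ _ _)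
      apply IsWeightedHomogeneous.sum
      intro i hi
      have h2 := (isWeightedHomogeneous_C (fun i : ℕ => p ^ i) ((p : ℚ) ^ i)).mul
        (whomog_pow (ih i (mem_range.mp hi)) (p ^ (n - i)))
      have h3 : 0 + p ^ (n - i) * p ^ i = p ^ n := by
        rw [zero_add, ← pow_add]
        congr 1
        have := mem_range.mp hi
        omega
      rwa [h3] at h2
    have h4 := h1.mul (isWeightedHomogeneous_C (fun i : ℕ => p ^ i) ((⅟(p : ℚ)) ^ n))
    simpa using h4

theorem whomog_wittStructureInt (Φ : MvPolynomial (Fin 2) ℤ)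
    (hΦ : ∀ k : ℕ, IsWeightedHomogeneous (fun q : Fin 2 × ℕ => p ^ q.2)
      (bind₁ (fun b : Fin 2 => rename (Prod.mk b) (wittPolynomial p ℚ k))
        (map (Int.castRingHom ℚ) Φ)) (p ^ k))
    (n : ℕ) :
    IsWeightedHomogeneous (fun q : Fin 2 × ℕ => p ^ q.2) (wittStructureInt p Φ n) (p ^ n) := by
  intro d hd
  have h2 : coeff d (wittStructureRat p (map (Int.castRingHom ℚ) Φ) n) ≠ 0 := by
    rw [← map_wittStructureInt, coeff_map]
    simpa using hd
  have h3 : wittStructureRat p (map (Int.castRingHom ℚ) Φ) n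
      = aeval (fun k => bind₁ (fun b : Fin 2 => rename (Prod.mk b) (wittPolynomial p ℚ k))
          (map (Int.castRingHom ℚ) Φ)) (xInTermsOfW p ℚ n) := rfl
  rw [h3] at h2
  exact whomog_aeval (fun k : ℕ => p ^ k) _ _ hΦ (whomog_xInTermsOfW n) h2

theorem whomog_wittSub (n : ℕ) :
    IsWeightedHomogeneous (fun q : Fin 2 × ℕ => p ^ q.2) (WittVector.wittSub p n) (p ^ n) := by
  apply whomog_wittStructureInt
  intro k
  rw [map_sub, map_X, map_X, map_sub, bind₁_X_right, bind₁_X_right]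
  exact whomog_sub (whomog_rename _ _ (whomog_wittPolynomial ℚ k))
    (whomog_rename _ _ (whomog_wittPolynomial ℚ k))

theorem whomog_wittAdd (n : ℕ) :
    IsWeightedHomogeneous (fun q : Fin 2 × ℕ => p ^ q.2) (WittVector.wittAdd p n) (p ^ n) := by
  apply whomog_wittStructureInt
  intro k
  rw [map_add, map_X, map_X, map_add, bind₁_X_right, bind₁_X_right]
  exact IsWeightedHomogeneous.add
    (whomog_rename (fun q : Fin 2 × ℕ => p ^ q.2) (Prod.mk 0) (whomog_wittPolynomial ℚ k))
    (whomog_rename (fun q : Fin 2 × ℕ => p ^ q.2) (Prod.mk 1) (whomog_wittPolynomial ℚ k))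


section Valuation

variable {K : Type*} [Field K] [Valued K (WithZero (Multiplicative ℤ))]

abbrev Γ := WithZero (Multiplicative ℤ)

theorem coe_ofAdd_pow (t : ℤ) (N : ℕ) :
    ((ofAdd t : Multiplicative ℤ) : Γ) ^ N = ((ofAdd ((N : ℤ) * t) : Multiplicative ℤ) : Γ) := by
  have h : (ofAdd t : Multiplicative ℤ) ^ N = ofAdd ((N : ℤ) * t) := by
    rw [← ofAdd_toAdd (ofAdd t ^ N), toAdd_pow, toAdd_ofAdd, nsmul_eq_mul]
  rw [← WithZero.coe_pow, h]

theorem coe_ofAdd_prod {ι : Type*} (s : Finset ι) (c : ι → ℤ) :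
    (∏ q ∈ s, ((ofAdd (c q) : Multiplicative ℤ) : Γ))
      = ((ofAdd (∑ q ∈ s, c q) : Multiplicative ℤ) : Γ) := by
  classical
  induction s using Finset.induction_on with
  | empty => simp
  | insert _ _ h ih =>
    rw [Finset.prod_insert h, Finset.sum_insert h, ih, ← WithZero.coe_mul, ← ofAdd_add]

theorem val_intCast_le_one (c : ℤ) : Valued.v ((c : K)) ≤ (1 : Γ) := by
  have hn : ∀ k : ℕ, Valued.v ((k : K)) ≤ (1 : Γ) := by
    intro k
    induction k with
    | zero => simp
    | succ k ih =>
      push_cast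
      refine le_trans (Valuation.map_add _ _ _) (max_le ih ?_)
      simp
  rcases Int.natAbs_eq c with h | h <;> rw [h]
  · rw [Int.cast_natCast]
    exact hn _
  · rw [Int.cast_neg, Int.cast_natCast, Valuation.map_neg]
    exact hn _

theorem term_bound {m k : ℕ} (hk : k ≤ m) {n : ℤ} (x : Fin 2 × ℕ → K)
    (hx : ∀ q : Fin 2 × ℕ, q.2 ≤ m →
      (Valued.v (x q)) ^ (p ^ (m - q.2)) ≤ ((ofAdd n : Multiplicative ℤ) : Γ))
    (d : (Fin 2 × ℕ) →₀ ℕ)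
    (hd : Finsupp.weight (fun q : Fin 2 × ℕ => p ^ q.2) d = p ^ k) :
    (Valued.v (∏ q ∈ d.support, x q ^ d q)) ^ (p ^ (m - k))
      ≤ ((ofAdd n : Multiplicative ℤ) : Γ) := by
  have hp1 : 1 < p := (Fact.out : p.Prime).one_lt
  have hsum : ∑ q ∈ d.support, d q * p ^ q.2 = p ^ k := by
    rw [← hd, Finsupp.weight_apply, Finsupp.sum]
    simp [smul_eq_mul]
  have hq2 : ∀ q ∈ d.support, q.2 ≤ k := by
    intro q hq
    have h1 : d q * p ^ q.2 ≤ p ^ k := by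
      rw [← hsum]
      exact Finset.single_le_sum (f := fun q => d q * p ^ q.2) (fun _ _ => Nat.zero_le _) hq
    have h2 : 1 ≤ d q := Nat.one_le_iff_ne_zero.mpr (Finsupp.mem_support_iff.mp hq)
    have h3 : p ^ q.2 ≤ p ^ k := le_trans (Nat.le_mul_of_pos_left _ h2) h1
    exact (Nat.pow_le_pow_iff_right hp1).mp h3
  by_cases hzero : ∃ q ∈ d.support, x q = 0
  · obtain ⟨q, hq, hxq⟩ := hzero
    have : (∏ q ∈ d.support, x q ^ d q) = 0 := by
      apply Finset.prod_eq_zero hq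
      rw [hxq]
      exact zero_pow (Finsupp.mem_support_iff.mp hq)
    rw [this, map_zero, zero_pow (by positivity)]
    exact zero_le'
  push_neg at hzero
  let t : Fin 2 × ℕ → ℤ := fun q =>
    if h : Valued.v (x q) = 0 then 0 else (WithZero.unzero h).toAdd
  have hvt : ∀ q ∈ d.support, Valued.v (x q) = ((ofAdd (t q) : Multiplicative ℤ) : Γ) := by
    intro q hq
    have hx0 : Valued.v (x q) ≠ 0 := by
      simp only [ne_eq, Valuation.zero_iff]
      exact hzero q hq
    simp only [t, dif_neg hx0, ofAdd_toAdd, WithZero.coe_unzero]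
  have ht : ∀ q ∈ d.support, (p : ℤ) ^ (m - q.2) * t q ≤ n := by
    intro q hq
    have := hx q (le_trans (hq2 q hq) hk)
    rw [hvt q hq, coe_ofAdd_pow] at this
    rw [WithZero.coe_le_coe, Multiplicative.ofAdd_le] at this
    exact_mod_cast this
  have hprod : Valued.v (∏ q ∈ d.support, x q ^ d q)
      = ((ofAdd (∑ q ∈ d.support, (d q : ℤ) * t q) : Multiplicative ℤ) : Γ) := by
    rw [map_prod]
    have heq : ∏ q ∈ d.support, Valued.v (x q ^ d q)
        = ∏ q ∈ d.support, ((ofAdd ((d q : ℤ) * t q) : Multiplicative ℤ) : Γ) :=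
      Finset.prod_congr rfl fun q hq => by rw [map_pow, hvt q hq, coe_ofAdd_pow]
    rw [heq]
    exact coe_ofAdd_prod _ _
  rw [hprod, coe_ofAdd_pow, WithZero.coe_le_coe, Multiplicative.ofAdd_le]
  -- now an integer inequality, proved by passing to ℚ
  have hppos : (0 : ℚ) < (p : ℚ) := by positivity
  have key : ((p : ℚ) ^ (m - k)) * (∑ q ∈ d.support, (d q : ℚ) * (t q : ℚ)) ≤ (n : ℚ) := by
    rw [Finset.mul_sum]
    have step1 : ∀ q ∈ d.support,
        (p : ℚ) ^ (m - k) * ((d q : ℚ) * (t q : ℚ))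
          ≤ (d q : ℚ) * (p : ℚ) ^ q.2 * (n : ℚ) / (p : ℚ) ^ k := by
      intro q hq
      have htQ : (p : ℚ) ^ (m - q.2) * (t q : ℚ) ≤ (n : ℚ) := by exact_mod_cast ht q hq
      have hpq : (p : ℚ) ^ (m - k) * (p : ℚ) ^ k = (p : ℚ) ^ (m - q.2) * (p : ℚ) ^ q.2 := by
        rw [← pow_add, ← pow_add]
        congr 1
        have h1 := hq2 q hq
        omega
      rw [le_div_iff₀ (by positivity)]
      have hiden : (p : ℚ) ^ (m - k) * ((d q : ℚ) * (t q : ℚ)) * (p : ℚ) ^ k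
          = (d q : ℚ) * (p : ℚ) ^ q.2 * ((p : ℚ) ^ (m - q.2) * (t q : ℚ)) := by
        linear_combination ((d q : ℚ) * (t q : ℚ)) * hpq
      rw [hiden]
      exact mul_le_mul_of_nonneg_left htQ (by positivity)
    refine le_trans (Finset.sum_le_sum step1) (le_of_eq ?_)
    have step2 : ∀ q ∈ d.support,
        (d q : ℚ) * (p : ℚ) ^ q.2 * (n : ℚ) / (p : ℚ) ^ k
          = ((d q : ℚ) * (p : ℚ) ^ q.2) * ((n : ℚ) / (p : ℚ) ^ k) :=
      fun q _ => by ring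
    rw [Finset.sum_congr rfl step2, ← Finset.sum_mul]
    have hcast : (∑ q ∈ d.support, (d q : ℚ) * (p : ℚ) ^ q.2) = (p : ℚ) ^ k := by
      have := congrArg (Nat.cast : ℕ → ℚ) hsum
      push_cast at this
      exact this
    rw [hcast, mul_div_cancel₀ _ (by positivity)]
  have : ((p : ℤ) ^ (m - k)) * (∑ q ∈ d.support, (d q : ℤ) * t q) ≤ n := by
    have h2 : (((p : ℤ) ^ (m - k)) * (∑ q ∈ d.support, (d q : ℤ) * t q) : ℚ) ≤ (n : ℚ) := by
      push_cast
      convert key using 2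
    exact_mod_cast h2
  exact_mod_cast this

end Valuation


theorem eval_bound {K : Type*} [Field K] [Valued K (WithZero (Multiplicative ℤ))]
    {m k : ℕ} (hk : k ≤ m) {n : ℤ} (φ : MvPolynomial (Fin 2 × ℕ) ℤ)
    (hφ : φ.IsWeightedHomogeneous (fun q : Fin 2 × ℕ => p ^ q.2) (p ^ k))
    (x : Fin 2 × ℕ → K)
    (hx : ∀ q : Fin 2 × ℕ, q.2 ≤ m →
      (Valued.v (x q)) ^ (p ^ (m - q.2)) ≤ ((ofAdd n : Multiplicative ℤ) : Γ)) :
    (Valued.v (aeval x φ)) ^ (p ^ (m - k)) ≤ ((ofAdd n : Multiplicative ℤ) : Γ) := by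
  have hterm : ∀ d ∈ φ.support,
      (Valued.v ((algebraMap ℤ K) (coeff d φ) * ∏ i ∈ d.support, x i ^ d i)) ^ (p ^ (m - k))
        ≤ ((ofAdd n : Multiplicative ℤ) : Γ) := by
    intro d hd
    rw [map_mul, mul_pow]
    have h1 : (Valued.v ((algebraMap ℤ K) (coeff d φ))) ^ (p ^ (m - k)) ≤ 1 := by
      have hc : Valued.v ((algebraMap ℤ K) (coeff d φ)) ≤ 1 := by
        rw [eq_intCast]
        exact val_intCast_le_one _
      calc (Valued.v ((algebraMap ℤ K) (coeff d φ))) ^ (p ^ (m - k))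
          ≤ 1 ^ (p ^ (m - k)) := pow_le_pow_left' hc _
        _ = 1 := one_pow _
    have h2 := term_bound hk x hx d (hφ (mem_support_iff.mp hd))
    calc (Valued.v ((algebraMap ℤ K) (coeff d φ))) ^ (p ^ (m - k))
          * (Valued.v (∏ i ∈ d.support, x i ^ d i)) ^ (p ^ (m - k))
        ≤ 1 * (Valued.v (∏ i ∈ d.support, x i ^ d i)) ^ (p ^ (m - k)) :=
          mul_le_mul_left h1 _
      _ = (Valued.v (∏ i ∈ d.support, x i ^ d i)) ^ (p ^ (m - k)) := one_mul _
      _ ≤ _ := h2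
  rw [aeval_def, eval₂_eq]
  rcases Finset.eq_empty_or_nonempty φ.support with h | h
  · rw [h]
    simp only [Finset.sum_empty, map_zero]
    rw [zero_pow (pow_pos (Nat.Prime.pos Fact.out) (m - k)).ne']
    exact zero_le'
  · obtain ⟨d₀, hd₀, hmax⟩ := Finset.exists_max_image φ.support
      (fun d => Valued.v ((algebraMap ℤ K) (coeff d φ) * ∏ i ∈ d.support, x i ^ d i)) h
    refine le_trans (pow_le_pow_left' (Valued.v.map_sum_le hmax) _) (hterm d₀ hd₀)

section Fil

variable {K : Type*} [Field K] [Valued K (WithZero (Multiplicative ℤ))] {m : ℕ}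

theorem mem_fil {n : ℤ} {w : TruncatedWittVector p (m + 1) K} :
    w ∈ brylinskiKatoFil p K m n ↔ ∀ i : Fin (m + 1),
      (Valued.v (w.coeff i)) ^ (p ^ (m - i.val))
        ≤ ((ofAdd n : Multiplicative ℤ) : WithZero (Multiplicative ℤ)) := Iff.rfl

theorem fil_mono {n n' : ℤ} (h : n ≤ n') {x : TruncatedWittVector p (m + 1) K}
    (hx : x ∈ brylinskiKatoFil p K m n) : x ∈ brylinskiKatoFil p K m n' := by
  rw [mem_fil] at hx ⊢
  intro i
  refine le_trans (hx i) ?_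
  rw [WithZero.coe_le_coe, Multiplicative.ofAdd_le]
  exact h

theorem truncate_out'' (x : TruncatedWittVector p (m + 1) K) :
    WittVector.truncate (m + 1) x.out = x := by
  ext i
  rw [WittVector.coeff_truncate, TruncatedWittVector.coeff_out]

theorem hx_of_mem {n : ℤ} {x y : TruncatedWittVector p (m + 1) K}
    (hx : x ∈ brylinskiKatoFil p K m n) (hy : y ∈ brylinskiKatoFil p K m n) :
    ∀ q : Fin 2 × ℕ, q.2 ≤ m →
      (Valued.v ((Function.uncurry ![x.out.coeff, y.out.coeff]) q)) ^ (p ^ (m - q.2))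
        ≤ ((ofAdd n : Multiplicative ℤ) : WithZero (Multiplicative ℤ)) := by
  rintro ⟨b, j⟩ hj
  have hb : b = 0 ∨ b = 1 := by
    rcases b with ⟨bv, hbv⟩
    rcases (by omega : bv = 0 ∨ bv = 1) with rfl | rfl
    · exact Or.inl rfl
    · exact Or.inr rfl
  rcases hb with rfl | rfl
  · have hco : (Function.uncurry ![x.out.coeff, y.out.coeff]) ((0 : Fin 2), j)
        = x.coeff ⟨j, by omega⟩ := by
      rw [Function.uncurry_apply_pair, Matrix.cons_val_zero,
        ← TruncatedWittVector.coeff_out x ⟨j, by omega⟩]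
    rw [hco]
    exact hx ⟨j, by omega⟩
  · have hco : (Function.uncurry ![x.out.coeff, y.out.coeff]) ((1 : Fin 2), j)
        = y.coeff ⟨j, by omega⟩ := by
      rw [Function.uncurry_apply_pair, Matrix.cons_val_one, Matrix.cons_val_zero,
        ← TruncatedWittVector.coeff_out y ⟨j, by omega⟩]
    rw [hco]
    exact hy ⟨j, by omega⟩

theorem fil_sub {n : ℤ} {x y : TruncatedWittVector p (m + 1) K}
    (hx : x ∈ brylinskiKatoFil p K m n) (hy : y ∈ brylinskiKatoFil p K m n) :
    x - y ∈ brylinskiKatoFil p K m n := by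
  rw [mem_fil]
  intro i
  have h1 : x - y = WittVector.truncate (m + 1) (x.out - y.out) := by
    rw [map_sub, truncate_out'', truncate_out'']
  rw [h1, WittVector.coeff_truncate, WittVector.sub_coeff]
  exact eval_bound (by omega : (i : ℕ) ≤ m) _ (whomog_wittSub i) _ (hx_of_mem hx hy)

theorem fil_add {n : ℤ} {x y : TruncatedWittVector p (m + 1) K}
    (hx : x ∈ brylinskiKatoFil p K m n) (hy : y ∈ brylinskiKatoFil p K m n) :
    x + y ∈ brylinskiKatoFil p K m n := by
  rw [mem_fil]
  intro i
  have h1 : x + y = WittVector.truncate (m + 1) (x.out + y.out) := by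
    rw [map_add, truncate_out'', truncate_out'']
  rw [h1, WittVector.coeff_truncate, WittVector.add_coeff]
  exact eval_bound (by omega : (i : ℕ) ≤ m) _ (whomog_wittAdd i) _ (hx_of_mem hx hy)

end Fil

end Stmt8Aux


/-- Let `K` be a complete discretely valued field of characteristic
`p > 0`, `s ≥ 1` an integer and `y ∈ fil_s W_{m+1}(K) \ fil_{s−1} W_{m+1}(K)`.  Then
`F(y) − y ∈ fil_{ps} W_{m+1}(K) \ fil_{ps−1} W_{m+1}(K)`. -/
theorem stmt8 (p : ℕ) [Fact p.Prime] (K : Type*) [Field K] [CharP K p]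
    [Valued K (WithZero (Multiplicative ℤ))] [CompleteSpace K]
    (m : ℕ) (s : ℕ) (hs : 1 ≤ s) (y : TruncatedWittVector p (m + 1) K)
    (h1 : y ∈ brylinskiKatoFil p K m (s : ℤ))
    (h2 : y ∉ brylinskiKatoFil p K m ((s : ℤ) - 1)) :
    wittFrobenius p K m y - y ∈ brylinskiKatoFil p K m ((p * s : ℕ) : ℤ) ∧
    wittFrobenius p K m y - y ∉ brylinskiKatoFil p K m (((p * s : ℕ) : ℤ) - 1) := by
  have hp2 : 2 ≤ p := (Fact.out : p.Prime).two_le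
  have hp2' : (2 : ℤ) ≤ (p : ℤ) := by exact_mod_cast hp2
  have hs' : (1 : ℤ) ≤ (s : ℤ) := by exact_mod_cast hs
  have hF : ∀ i : Fin (m + 1), (wittFrobenius p K m y).coeff i = y.coeff i ^ p := by
    intro i
    show (TruncatedWittVector.mk p (fun i => y.coeff i ^ p)).coeff i = _
    rw [TruncatedWittVector.coeff_mk]
  have h1' := (Stmt8Aux.mem_fil).mp h1
  have hFmem : wittFrobenius p K m y ∈ brylinskiKatoFil p K m ((p * s : ℕ) : ℤ) := by
    rw [Stmt8Aux.mem_fil]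
    intro i
    rw [hF i, map_pow]
    have harith : ((p : ℤ)) * (s : ℤ) = ((p * s : ℕ) : ℤ) := by push_cast; ring
    calc (Valued.v (y.coeff i) ^ p) ^ (p ^ (m - i.val))
        = (Valued.v (y.coeff i) ^ (p ^ (m - i.val))) ^ p := by
          rw [← pow_mul, ← pow_mul, mul_comm]
      _ ≤ ((ofAdd (s : ℤ) : Multiplicative ℤ) : WithZero (Multiplicative ℤ)) ^ p :=
          pow_le_pow_left' (h1' i) p
      _ = _ := by rw [Stmt8Aux.coe_ofAdd_pow, harith]
  have hsle : (s : ℤ) ≤ ((p * s : ℕ) : ℤ) := by push_cast; nlinarith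
  refine ⟨Stmt8Aux.fil_sub hFmem (Stmt8Aux.fil_mono hsle h1), ?_⟩
  intro hmem
  have h2' : ∃ i : Fin (m + 1), ¬ (Valued.v (y.coeff i)) ^ (p ^ (m - i.val))
      ≤ ((ofAdd ((s : ℤ) - 1) : Multiplicative ℤ) : WithZero (Multiplicative ℤ)) := by
    by_contra hc
    push_neg at hc
    exact h2 ((Stmt8Aux.mem_fil).mpr fun i => hc i)
  obtain ⟨i0, hi0⟩ := h2'
  set N := p ^ (m - i0.val) with hN
  have hNpos : 0 < N := by positivity
  have hvy0 : Valued.v (y.coeff i0) ≠ 0 := by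
    intro h0
    apply hi0
    rw [h0, zero_pow hNpos.ne']
    exact zero_le'
  obtain ⟨t, ht⟩ : ∃ t : ℤ, Valued.v (y.coeff i0)
      = ((ofAdd t : Multiplicative ℤ) : WithZero (Multiplicative ℤ)) :=
    ⟨(WithZero.unzero hvy0).toAdd, by rw [ofAdd_toAdd, WithZero.coe_unzero]⟩
  have e1 : (N : ℤ) * t ≤ (s : ℤ) := by
    have h3 := h1' i0
    rwa [ht, Stmt8Aux.coe_ofAdd_pow, WithZero.coe_le_coe, Multiplicative.ofAdd_le] at h3
  have e2 : ¬ ((N : ℤ) * t ≤ (s : ℤ) - 1) := by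
    intro hc
    apply hi0
    rw [ht, Stmt8Aux.coe_ofAdd_pow, WithZero.coe_le_coe, Multiplicative.ofAdd_le]
    exact hc
  have e : (N : ℤ) * t = (s : ℤ) := by omega
  have hsle2 : (s : ℤ) ≤ ((p * s : ℕ) : ℤ) - 1 := by push_cast; nlinarith
  have hy2 := Stmt8Aux.fil_mono hsle2 h1
  have hFmem2 : wittFrobenius p K m y ∈ brylinskiKatoFil p K m (((p * s : ℕ) : ℤ) - 1) := by
    have h3 := Stmt8Aux.fil_add hmem hy2
    rwa [sub_add_cancel] at h3
  have h4 := (Stmt8Aux.mem_fil).mp hFmem2 i0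
  have h5 : (Valued.v ((wittFrobenius p K m y).coeff i0)) ^ N
      = ((ofAdd ((p * s : ℕ) : ℤ) : Multiplicative ℤ) : WithZero (Multiplicative ℤ)) := by
    rw [hF i0, map_pow, ht, ← pow_mul, Stmt8Aux.coe_ofAdd_pow]
    have harith : ((p * N : ℕ) : ℤ) * t = ((p * s : ℕ) : ℤ) := by
      push_cast
      calc (p : ℤ) * (N : ℤ) * t = (p : ℤ) * ((N : ℤ) * t) := by ring
        _ = (p : ℤ) * (s : ℤ) := by rw [e]
    rw [harith]
  rw [h5, WithZero.coe_le_coe, Multiplicative.ofAdd_le] at h4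
  omega
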